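/- Let G be a group with an epimorphism ν: G ↠ ℤ^m, inducing ν^♯: Hom(ℤ^m, ℚ) ↪ Hom(G, ℚ) = H¹(G;ℚ). The assignment ν ↦ im(ν^♯) gives a bijection between epimorphisms G ↠ ℤ^m up to automorphisms of ℤ^m and m-dimensional ℚ-linear subspaces P of H¹(G;ℚ) such that P is spanned by the image of a rank-m quotient of the abelianization; when H₁(G;ℤ) ≅ ℤ^r is free, every m-dimensional ℚ-subspace of H¹(G;ℚ) ≅ ℚ^r arises this way. -/

import Mathlib

/-- `H₁(G;ℤ)` of a group `G`: the abelianization, written additively. -/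
abbrev H1 (G : Type*) [Group G] : Type _ := Additive (Abelianization G)

/-- The pullback `ν^♯` on rational characters induced by `ν : H₁(G;ℤ) → ℤ^m`:
a `ℚ`-linear map `Hom(ℤ^m, ℚ) → Hom(H₁(G;ℤ), ℚ) = H¹(G;ℚ)`. -/
noncomputable def pullbackChar (G : Type*) [Group G] (m : ℕ)
    (ν : H1 G →ₗ[ℤ] (Fin m → ℤ)) :
    ((Fin m → ℤ) →ₗ[ℤ] ℚ) →ₗ[ℚ] (H1 G →ₗ[ℤ] ℚ) where
  toFun f := f.comp ν
  map_add' f g := by ext; simp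
  map_smul' c f := by ext; simp

open Module LinearMap

lemma pullbackChar_apply (G : Type*) [Group G] (m : ℕ)
    (ν : H1 G →ₗ[ℤ] (Fin m → ℤ)) (f : (Fin m → ℤ) →ₗ[ℤ] ℚ) :
    pullbackChar G m ν f = f.comp ν := rfl

/-- The `ℚ`-dual of `ℤ^n` is `ℚ^n`. -/
noncomputable def dualPiInt (n : ℕ) : ((Fin n → ℤ) →ₗ[ℤ] ℚ) ≃ₗ[ℚ] (Fin n → ℚ) :=
  (LinearEquiv.congrLeft ℚ ℚ
      (Finsupp.linearEquivFunOnFinite ℤ ℤ (Fin n))).symm ≪≫ₗ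
    (Finsupp.llift ℚ ℤ ℚ (Fin n)).symm

lemma finrank_dual_pi (n : ℕ) : finrank ℚ ((Fin n → ℤ) →ₗ[ℤ] ℚ) = n := by
  rw [(dualPiInt n).finrank_eq, Module.finrank_fin_fun]

/-- The `ℚ`-dual of a `ℤ`-module equivalent to `ℤ^r` is finite dimensional. -/
noncomputable def dualEquivOf (G : Type*) [Group G] (r : ℕ) (e : H1 G ≃ₗ[ℤ] (Fin r → ℤ)) :
    (H1 G →ₗ[ℤ] ℚ) ≃ₗ[ℚ] (Fin r → ℚ) :=
  (LinearEquiv.congrLeft ℚ ℚ e) ≪≫ₗ dualPiInt r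

lemma finrank_range_pullbackChar {G : Type*} [Group G] {m : ℕ}
    (ν : H1 G →ₗ[ℤ] (Fin m → ℤ)) (hν : Function.Surjective ν) :
    finrank ℚ (LinearMap.range (pullbackChar G m ν)) = m := by
  have hinj : Function.Injective (pullbackChar G m ν) := by
    intro f g h
    refine LinearMap.ext fun v => ?_
    obtain ⟨y, rfl⟩ := hν v
    exact LinearMap.congr_fun h y
  exact ((LinearEquiv.ofInjective _ hinj).symm.finrank_eq).trans (finrank_dual_pi m)

/-- Range inclusion of pullbacks forces kernel inclusion. -/
lemma ker_le_of_range_le {G : Type*} [Group G] {m : ℕ}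
    (ν₁ ν₂ : H1 G →ₗ[ℤ] (Fin m → ℤ))
    (h : LinearMap.range (pullbackChar G m ν₂) ≤ LinearMap.range (pullbackChar G m ν₁)) :
    LinearMap.ker ν₁ ≤ LinearMap.ker ν₂ := by
  intro x hx
  have hx1 : ν₁ x = 0 := hx
  rw [LinearMap.mem_ker]
  have key : ∀ i, ((ν₂ x i : ℤ) : ℚ) = 0 := by
    intro i
    set c : (Fin m → ℤ) →ₗ[ℤ] ℚ :=
      { toFun := fun v => (v i : ℚ)
        map_add' := by intro v w; push_cast; simp
        map_smul' := by intro a v; push_cast; simp } with hc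
    obtain ⟨f, hf⟩ := h ⟨c, rfl⟩
    have hfx := LinearMap.congr_fun hf x
    have h0 : f (ν₁ x) = ((ν₂ x i : ℤ) : ℚ) := hfx
    rw [hx1, map_zero] at h0
    exact h0.symm
  funext i
  exact_mod_cast key i

/-- `P` is contained in the range of the pullback of `ψ ∘ μ|^range`. -/
lemma P_le_range {G : Type*} [Group G] {m : ℕ} (P : Submodule ℚ (H1 G →ₗ[ℤ] ℚ))
    (b : Basis (Fin m) ℚ P) (μ : H1 G →ₗ[ℤ] (Fin m → ℚ))
    (hμ : ∀ j x, μ x j = (b j : H1 G →ₗ[ℤ] ℚ) x)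
    {k : ℕ} (ψ : (LinearMap.range μ) ≃ₗ[ℤ] (Fin k → ℤ)) :
    P ≤ LinearMap.range (pullbackChar G k (ψ.toLinearMap ∘ₗ μ.rangeRestrict)) := by
  have hb : ∀ j, ((b j : H1 G →ₗ[ℤ] ℚ)) ∈
      LinearMap.range (pullbackChar G k (ψ.toLinearMap ∘ₗ μ.rangeRestrict)) := by
    intro j
    refine ⟨((LinearMap.proj j : (Fin m → ℚ) →ₗ[ℚ] ℚ).restrictScalars ℤ) ∘ₗ
      (LinearMap.range μ).subtype ∘ₗ ψ.symm.toLinearMap, ?_⟩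
    ext x
    have : (μ.rangeRestrict x : Fin m → ℚ) = μ x := rfl
    simp [pullbackChar_apply, LinearMap.comp_apply, this, hμ]
  intro f hf
  have hrepr := b.sum_repr ⟨f, hf⟩
  have hcoe : f = ∑ j, (b.repr ⟨f, hf⟩ j) • ((b j : H1 G →ₗ[ℤ] ℚ)) := by
    have h2 := congrArg (Subtype.val) hrepr
    simp only [Submodule.coe_sum, Submodule.coe_smul] at h2
    exact h2.symm
  rw [hcoe]
  exact Submodule.sum_mem _ fun j _ => Submodule.smul_mem _ _ (hb j)

/-- The Dwyer–Fried parametrization.  Let `G` be a group with `H₁(G;ℤ) ≅ ℤ^r` free.  The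
assignment `ν ↦ P_ν = im(ν^♯) ⊆ H¹(G;ℚ)` sets up a bijective correspondence between
epimorphisms `ν : H₁(G;ℤ) ↠ ℤ^m` up to automorphisms of `ℤ^m` and `m`-dimensional
`ℚ`-linear subspaces of `H¹(G;ℚ) ≅ ℚ^r`: the image `P_ν` is `m`-dimensional, every
`m`-dimensional subspace arises from some epimorphism, and two epimorphisms give the same
subspace iff they differ by an automorphism of `ℤ^m`. -/
theorem dwyer_fried_parametrization (G : Type*) [Group G] (r m : ℕ)
    (e : H1 G ≃ₗ[ℤ] (Fin r → ℤ)) :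
    (∀ ν : H1 G →ₗ[ℤ] (Fin m → ℤ), Function.Surjective ν →
      Module.finrank ℚ (LinearMap.range (pullbackChar G m ν)) = m) ∧
    (∀ P : Submodule ℚ (H1 G →ₗ[ℤ] ℚ), Module.finrank ℚ P = m →
      ∃ ν : H1 G →ₗ[ℤ] (Fin m → ℤ), Function.Surjective ν ∧
        LinearMap.range (pullbackChar G m ν) = P) ∧
    (∀ ν₁ ν₂ : H1 G →ₗ[ℤ] (Fin m → ℤ), Function.Surjective ν₁ → Function.Surjective ν₂ →
      (LinearMap.range (pullbackChar G m ν₁) = LinearMap.range (pullbackChar G m ν₂) ↔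
        ∃ φ : (Fin m → ℤ) ≃ₗ[ℤ] (Fin m → ℤ), ν₂ = φ.toLinearMap.comp ν₁)) := by
  haveI : Module.Finite ℤ (H1 G) := Module.Finite.equiv e.symm
  haveI : Module.Free ℤ (H1 G) := Module.Free.of_equiv e.symm
  haveI : FiniteDimensional ℚ (H1 G →ₗ[ℤ] ℚ) :=
    Module.Finite.equiv (dualEquivOf G r e).symm
  refine ⟨fun ν hν => finrank_range_pullbackChar ν hν, ?_, ?_⟩
  · -- surjectivity of the parametrization
    intro P hP
    let b : Basis (Fin m) ℚ P := Module.finBasisOfFinrankEq ℚ P hP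
    let μ : H1 G →ₗ[ℤ] (Fin m → ℚ) := LinearMap.pi (fun j => ((b j : H1 G →ₗ[ℤ] ℚ)))
    have hμ : ∀ j x, μ x j = (b j : H1 G →ₗ[ℤ] ℚ) x := fun j x => rfl
    set L := LinearMap.range μ with hL
    haveI : Module.Finite ℤ L := Module.Finite.range μ
    haveI : Module.Free ℤ L := Module.free_of_finite_type_torsion_free'
    set k := finrank ℤ L with hkdef
    let c : Basis (Fin k) ℤ L := Module.finBasis ℤ L
    let ψ₀ : L ≃ₗ[ℤ] (Fin k → ℤ) := c.equivFun
    let ν₀ : H1 G →ₗ[ℤ] (Fin k → ℤ) := ψ₀.toLinearMap ∘ₗ μ.rangeRestrict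
    have hν₀ : Function.Surjective ν₀ :=
      (EquivLike.surjective ψ₀).comp (LinearMap.surjective_rangeRestrict μ)
    have hm_le_k : m ≤ k := by
      have h1 : finrank ℚ (LinearMap.range (pullbackChar G k ν₀)) = k :=
        finrank_range_pullbackChar ν₀ hν₀
      have h2 := Submodule.finrank_mono (P_le_range P b μ hμ ψ₀)
      rw [hP, h1] at h2
      exact h2
    have hk_le_m : k ≤ m := by
      have hind : LinearIndependent ℤ (fun i => ((c i : Fin m → ℚ))) :=
        c.linearIndependent.map' L.subtype L.ker_subtype
      have hindQ : LinearIndependent ℚ (fun i => ((c i : Fin m → ℚ))) :=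
        (LinearIndependent.iff_fractionRing ℤ ℚ).mp hind
      have h3 := hindQ.fintype_card_le_finrank
      simpa [Module.finrank_fin_fun] using h3
    have hk : k = m := le_antisymm hk_le_m hm_le_k
    let ψ : L ≃ₗ[ℤ] (Fin m → ℤ) := (c.reindex (finCongr hk)).equivFun
    refine ⟨ψ.toLinearMap ∘ₗ μ.rangeRestrict,
      (EquivLike.surjective ψ).comp (LinearMap.surjective_rangeRestrict μ), ?_⟩
    have hle := P_le_range P b μ hμ ψ
    exact (Submodule.eq_of_le_of_finrank_eq hle (by
      rw [hP, finrank_range_pullbackChar _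
        ((EquivLike.surjective ψ).comp (LinearMap.surjective_rangeRestrict μ))])).symm
  · -- injectivity of the parametrization
    intro ν₁ ν₂ h₁ h₂
    constructor
    · intro hr
      have hker : LinearMap.ker ν₁ = LinearMap.ker ν₂ :=
        le_antisymm (ker_le_of_range_le ν₁ ν₂ hr.ge) (ker_le_of_range_le ν₂ ν₁ hr.le)
      obtain ⟨s, hs⟩ := ν₁.exists_rightInverse_of_surjective (LinearMap.range_eq_top.2 h₁)
      obtain ⟨t, ht⟩ := ν₂.exists_rightInverse_of_surjective (LinearMap.range_eq_top.2 h₂)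
      have hA : ν₂.comp (s.comp ν₁) = ν₂ := by
        refine LinearMap.ext fun x => ?_
        have hmem : s (ν₁ x) - x ∈ LinearMap.ker ν₁ := by
          rw [LinearMap.mem_ker, map_sub, sub_eq_zero]
          exact LinearMap.congr_fun hs (ν₁ x)
        rw [hker, LinearMap.mem_ker, map_sub, sub_eq_zero] at hmem
        simpa using hmem
      have hB : ν₁.comp (t.comp ν₂) = ν₁ := by
        refine LinearMap.ext fun x => ?_
        have hmem : t (ν₂ x) - x ∈ LinearMap.ker ν₂ := by
          rw [LinearMap.mem_ker, map_sub, sub_eq_zero]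
          exact LinearMap.congr_fun ht (ν₂ x)
        rw [← hker, LinearMap.mem_ker, map_sub, sub_eq_zero] at hmem
        simpa using hmem
      refine ⟨LinearEquiv.ofLinear (ν₂ ∘ₗ s) (ν₁ ∘ₗ t) ?_ ?_, ?_⟩
      · refine LinearMap.ext fun v => ?_
        have e1 := LinearMap.congr_fun hA (t v)
        have e2 := LinearMap.congr_fun ht v
        simpa using e1.trans e2
      · refine LinearMap.ext fun v => ?_
        have e1 := LinearMap.congr_fun hB (s v)
        have e2 := LinearMap.congr_fun hs v
        simpa using e1.trans e2
      · refine LinearMap.ext fun x => ?_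
        exact (LinearMap.congr_fun hA x).symm
    · rintro ⟨φ, rfl⟩
      apply le_antisymm <;> rintro - ⟨f, rfl⟩
      · exact ⟨f ∘ₗ φ.symm.toLinearMap, by ext x; simp [pullbackChar_apply]⟩
      · exact ⟨f ∘ₗ φ.toLinearMap, by ext x; simp [pullbackChar_apply]⟩
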